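/- arXiv:2412.18808 — 2 statements merged into one kernel-verified Lean document; each statement's English description precedes it below -/
import Mathlib

section
/- For any mixture π ∈ Δ(Δ(Y)) over distributions on a finite label space Y with |Y| = m, the 1-Wasserstein distance (with ℓ1 ground metric) between π and its k-th order projection proj_k(π) is at most m/(2√k), where proj_k(π) is the distribution of the empirical histogram of k i.i.d. labels drawn from a random component p ~ π. -/
open MeasureTheory

/-- 1-Wasserstein distance wrt a cost `d`, as the infimum of the expected cost
over all couplings. -/
noncomputable def W1 {α : Type*} [MeasurableSpace α] (d : α → α → ℝ)
    (μ ν : Measure α) : ℝ :=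
  sInf {c | ∃ γ : Measure (α × α),
    γ.map Prod.fst = μ ∧ γ.map Prod.snd = ν ∧ c = ∫ q, d q.1 q.2 ∂γ}

/-- ℓ1 distance between two points of the simplex (as vectors). -/
noncomputable def l1dist {Y : Type*} [Fintype Y] (p q : Y → ℝ) : ℝ :=
  ∑ y, |p y - q y|

/-- The measure on `Y` corresponding to a probability vector `p : Y → ℝ`. -/
noncomputable def measOf {Y : Type*} [Fintype Y] [MeasurableSpace Y] (p : Y → ℝ) :
    Measure Y :=
  ∑ y, ENNReal.ofReal (p y) • Measure.dirac y

/-- The empirical distribution (normalized histogram) of a `k`-tuple of labels. -/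
noncomputable def emp {Y : Type*} [Fintype Y] [DecidableEq Y] (k : ℕ)
    (ys : Fin k → Y) : Y → ℝ :=
  fun j => ((Finset.univ.filter fun i => ys i = j).card : ℝ) / k

/-- The `k`-th order projection of a mixture `π ∈ Δ(Δ(Y))`: draw `p ~ π`, draw `k`
i.i.d. labels from `p`, and output their empirical distribution. -/
noncomputable def projk {Y : Type*} [Fintype Y] [DecidableEq Y] [MeasurableSpace Y]
    [MeasurableSingletonClass Y] (k : ℕ) (π : Measure (Y → ℝ)) : Measure (Y → ℝ) :=
  π.bind fun p => (Measure.pi fun _ : Fin k => measOf p).map (emp k)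

/-! ### Auxiliary algebraic lemmas -/

section Alg
variable {Y : Type*} [Fintype Y] [DecidableEq Y]

omit [DecidableEq Y] in
lemma aux_master (k : ℕ) (F : Fin k → Y → ℝ) :
    ∑ ys : Fin k → Y, ∏ i, F i (ys i) = ∏ i, ∑ z, F i z := by
  rw [← Fintype.piFinset_univ, ← Finset.prod_univ_sum]

omit [DecidableEq Y] in
lemma aux_Wsum (k : ℕ) (p : Y → ℝ) (hp1 : ∑ y, p y = 1) :
    ∑ ys : Fin k → Y, ∏ i, p (ys i) = 1 := by
  rw [aux_master k (fun _ z => p z)]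
  simp [hp1]

lemma aux_keyy (k : ℕ) (hk : 0 < k) (p : Y → ℝ) (hp0 : ∀ y, 0 ≤ p y)
    (hp1 : ∑ y, p y = 1) (y : Y) :
    ∑ ys : Fin k → Y, (∏ i, p (ys i)) * |p y - emp k ys y| ≤ 1 / (2 * Real.sqrt k) := by
  have hkR : (0:ℝ) < k := by exact_mod_cast hk
  set a := p y with ha
  have ha0 : 0 ≤ a := hp0 y
  set g : Y → ℝ := fun z => a - (if z = y then 1 else 0) with hg
  set W : (Fin k → Y) → ℝ := fun ys => ∏ i, p (ys i) with hWdef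
  have hW0 : ∀ ys, 0 ≤ W ys := fun ys => Finset.prod_nonneg fun i _ => hp0 _
  have hWsum : ∑ ys : Fin k → Y, W ys = 1 := aux_Wsum k p hp1
  have hh : ∀ ys : Fin k → Y, p y - emp k ys y = (∑ i, g (ys i)) / k := by
    intro ys
    have hcard : ((Finset.univ.filter fun i => ys i = y).card : ℝ)
        = ∑ i : Fin k, (if ys i = y then (1:ℝ) else 0) := by
      rw [Finset.card_filter]; push_cast; simp
    simp only [emp, hg, hcard, Finset.sum_sub_distrib, Finset.sum_const,
      Finset.card_univ, Fintype.card_fin, nsmul_eq_mul]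
    field_simp
    rw [ha]; ring
  have hpg : ∑ z, p z * g z = 0 := by
    simp only [hg, mul_sub, Finset.sum_sub_distrib, ← Finset.sum_mul, hp1, mul_ite, mul_one,
      mul_zero]
    rw [Finset.sum_ite_eq' Finset.univ y p]
    simp [ha]
  have hpg2 : ∑ z, p z * (g z * g z) = a - a ^ 2 := by
    have step : ∀ z, p z * (g z * g z)
        = p z * a ^ 2 + (if z = y then p z * (1 - 2 * a) else 0) := by
      intro z
      by_cases h : z = y
      · subst h; simp only [hg, eq_self_iff_true, if_true]; ring
      · simp only [hg, if_neg h]; ring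
    rw [Finset.sum_congr rfl fun z _ => step z]
    rw [Finset.sum_add_distrib, ← Finset.sum_mul, hp1,
      Finset.sum_ite_eq' Finset.univ y (fun z => p z * (1 - 2*a))]
    simp only [Finset.mem_univ, if_true, one_mul, ← ha]
    ring
  have hT : ∀ i j : Fin k,
      ∑ ys : Fin k → Y, W ys * (g (ys i) * g (ys j))
        = if i = j then a - a ^ 2 else 0 := by
    intro i j
    have step : ∀ ys : Fin k → Y, W ys * (g (ys i) * g (ys j))
        = ∏ l, (p (ys l) * ((if l = i then g (ys l) else 1) * (if l = j then g (ys l) else 1))) := by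
      intro ys
      rw [Finset.prod_mul_distrib, Finset.prod_mul_distrib, Finset.prod_ite_eq',
        Finset.prod_ite_eq']
      simp [hWdef]
    rw [Finset.sum_congr rfl fun ys _ => step ys,
      aux_master k (fun l z => p z * ((if l = i then g z else 1) * (if l = j then g z else 1)))]
    by_cases hij : i = j
    · subst hij
      rw [if_pos rfl]
      rw [Finset.prod_eq_single_of_mem i (Finset.mem_univ i)]
      · simp only [eq_self_iff_true, if_true]
        exact hpg2
      · intro l _ hl
        simp only [if_neg hl, one_mul, mul_one]
        exact hp1
    · rw [if_neg hij]
      apply Finset.prod_eq_zero (Finset.mem_univ i)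
      simp only [eq_self_iff_true, if_true, if_neg hij, mul_one]
      exact hpg
  have hvar : ∑ ys : Fin k → Y, W ys * (p y - emp k ys y) ^ 2 = (a - a ^ 2) / k := by
    have expand : ∀ ys : Fin k → Y,
        (∑ i, g (ys i)) ^ 2 = ∑ i : Fin k, ∑ j : Fin k, g (ys i) * g (ys j) := by
      intro ys; rw [sq, Finset.sum_mul_sum]
    have e1 : ∀ ys : Fin k → Y, W ys * (p y - emp k ys y) ^ 2
        = (∑ i : Fin k, ∑ j : Fin k, W ys * (g (ys i) * g (ys j))) / ((k:ℝ) * k) := by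
      intro ys
      rw [hh ys, div_pow, expand ys, pow_two, ← mul_div_assoc]
      congr 1
      rw [Finset.mul_sum]
      exact Finset.sum_congr rfl fun i _ => by rw [Finset.mul_sum]
    rw [Finset.sum_congr rfl fun ys _ => e1 ys, ← Finset.sum_div, Finset.sum_comm]
    rw [Finset.sum_congr rfl fun i (_ : i ∈ (Finset.univ : Finset (Fin k))) => Finset.sum_comm]
    have hrow : ∀ i : Fin k, ∑ j : Fin k, ∑ ys : Fin k → Y, W ys * (g (ys i) * g (ys j))
        = a - a ^ 2 := by
      intro i
      rw [Finset.sum_congr rfl fun j _ => hT i j]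
      simp
    rw [Finset.sum_congr rfl fun i _ => hrow i, Finset.sum_const, Finset.card_univ,
      Fintype.card_fin, nsmul_eq_mul]
    field_simp
  set x := ∑ ys : Fin k → Y, W ys * |p y - emp k ys y| with hx
  have hx0 : 0 ≤ x := Finset.sum_nonneg fun ys _ => mul_nonneg (hW0 ys) (abs_nonneg _)
  have hx2 : x ^ 2 ≤ (a - a ^ 2) / k := by
    have cs := Finset.sum_mul_sq_le_sq_mul_sq Finset.univ
      (fun ys : Fin k → Y => Real.sqrt (W ys))
      (fun ys : Fin k → Y => Real.sqrt (W ys) * |p y - emp k ys y|)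
    have e1 : ∀ ys : Fin k → Y, Real.sqrt (W ys) * (Real.sqrt (W ys) * |p y - emp k ys y|)
        = W ys * |p y - emp k ys y| := by
      intro ys; rw [← mul_assoc, Real.mul_self_sqrt (hW0 ys)]
    have e2 : ∀ ys : Fin k → Y, Real.sqrt (W ys) ^ 2 = W ys := fun ys => Real.sq_sqrt (hW0 ys)
    have e3 : ∀ ys : Fin k → Y, (Real.sqrt (W ys) * |p y - emp k ys y|) ^ 2
        = W ys * (p y - emp k ys y) ^ 2 := by
      intro ys; rw [mul_pow, Real.sq_sqrt (hW0 ys), sq_abs]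
    rw [Finset.sum_congr rfl fun ys _ => e1 ys, Finset.sum_congr rfl fun ys _ => e2 ys,
      Finset.sum_congr rfl fun ys _ => e3 ys, hWsum, one_mul, hvar] at cs
    exact cs
  have hs : (0:ℝ) < Real.sqrt k := Real.sqrt_pos.2 hkR
  have hks : Real.sqrt k ^ 2 = (k:ℝ) := Real.sq_sqrt (le_of_lt hkR)
  have hb : x ^ 2 ≤ (1 / (2 * Real.sqrt k)) ^ 2 := by
    have h14 : a - a ^ 2 ≤ 1 / 4 := by nlinarith [sq_nonneg (a - 1/2)]
    have e : (1 / (2 * Real.sqrt k)) ^ 2 = (1/4) / k := by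
      field_simp
      nlinarith [hks]
    rw [e]
    refine le_trans hx2 ?_
    gcongr
  exact le_of_pow_le_pow_left₀ two_ne_zero (by positivity) hb

lemma aux_key (k : ℕ) (hk : 0 < k) (p : Y → ℝ) (hp0 : ∀ y, 0 ≤ p y) (hp1 : ∑ y, p y = 1) :
    ∑ ys : Fin k → Y, (∏ i, p (ys i)) * l1dist p (emp k ys)
      ≤ (Fintype.card Y : ℝ) / (2 * Real.sqrt k) := by
  have e1 : ∑ ys : Fin k → Y, (∏ i, p (ys i)) * l1dist p (emp k ys)
      = ∑ y : Y, ∑ ys : Fin k → Y, (∏ i, p (ys i)) * |p y - emp k ys y| := by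
    have e0 : ∀ ys : Fin k → Y, (∏ i, p (ys i)) * l1dist p (emp k ys)
        = ∑ y, (∏ i, p (ys i)) * |p y - emp k ys y| := by
      intro ys; rw [l1dist, Finset.mul_sum]
    rw [Finset.sum_congr rfl fun ys _ => e0 ys, Finset.sum_comm]
  rw [e1]
  calc ∑ y : Y, ∑ ys : Fin k → Y, (∏ i, p (ys i)) * |p y - emp k ys y|
      ≤ ∑ _y : Y, 1 / (2 * Real.sqrt k) :=
        Finset.sum_le_sum fun y _ => aux_keyy k hk p hp0 hp1 y
    _ = (Fintype.card Y : ℝ) / (2 * Real.sqrt k) := by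
        rw [Finset.sum_const, Finset.card_univ, nsmul_eq_mul, mul_one_div]

end Alg

/-! ### Auxiliary measure-theoretic lemmas -/

section Meas
variable {Y : Type*} [Fintype Y] [DecidableEq Y] [MeasurableSpace Y]
  [MeasurableSingletonClass Y]

omit [DecidableEq Y] [MeasurableSingletonClass Y] in
instance aux_measOf_finite (p : Y → ℝ) : IsFiniteMeasure (measOf p) := by
  constructor
  rw [measOf, Measure.finset_sum_apply]
  refine ENNReal.sum_lt_top.2 fun y _ => ?_
  simp only [Measure.smul_apply, smul_eq_mul]
  exact ENNReal.mul_lt_top ENNReal.ofReal_lt_top (by simp)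

lemma aux_measOf_singleton (p : Y → ℝ) (y : Y) :
    measOf p {y} = ENNReal.ofReal (p y) := by
  rw [measOf, Measure.finset_sum_apply]
  simp only [Measure.smul_apply, smul_eq_mul, Measure.dirac_apply,
    Set.indicator_apply, Set.mem_singleton_iff, Pi.one_apply, mul_ite, mul_one, mul_zero]
  rw [Finset.sum_ite_eq' Finset.univ y (fun z => ENNReal.ofReal (p z))]
  simp

lemma aux_pi_measOf (k : ℕ) (p : Y → ℝ) :
    (Measure.pi fun _ : Fin k => measOf p)
      = ∑ ys : Fin k → Y, (∏ i, ENNReal.ofReal (p (ys i))) • Measure.dirac ys := by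
  refine Measure.ext_of_singleton fun ys => ?_
  have L : (Measure.pi fun _ : Fin k => measOf p) {ys} = ∏ i, ENNReal.ofReal (p (ys i)) := by
    rw [← Set.univ_pi_singleton ys, Measure.pi_pi]
    exact Finset.prod_congr rfl fun i _ => aux_measOf_singleton p (ys i)
  have R : (∑ zs : Fin k → Y, (∏ i, ENNReal.ofReal (p (zs i))) • Measure.dirac zs) {ys}
      = ∏ i, ENNReal.ofReal (p (ys i)) := by
    rw [Measure.finset_sum_apply]
    simp only [Measure.smul_apply, smul_eq_mul, Measure.dirac_apply,
      Set.indicator_apply, Set.mem_singleton_iff, Pi.one_apply, mul_ite, mul_one, mul_zero]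
    rw [Finset.sum_ite_eq' Finset.univ ys (fun zs => ∏ i, ENNReal.ofReal (p (zs i)))]
    simp
  rw [L, R]

end Meas

/-- Mapping a bind. -/
lemma aux_map_bind {α β δ : Type*} [MeasurableSpace α] [MeasurableSpace β] [MeasurableSpace δ]
    (μ : Measure α) (κ : α → Measure β) (hκ : Measurable κ) {f : β → δ} (hf : Measurable f) :
    (μ.bind κ).map f = μ.bind fun a => (κ a).map f := by
  unfold Measure.bind
  rw [← Measure.join_map_map hf, Measure.map_map (Measure.measurable_map _ hf) hκ]
  rfl

lemma aux_bind_congr_ae {α β : Type*} [MeasurableSpace α] [MeasurableSpace β]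
    (μ : Measure α) {f g : α → Measure β} (h : f =ᵐ[μ] g) : μ.bind f = μ.bind g := by
  unfold Measure.bind
  rw [Measure.map_congr h]

/-- For any mixture `π` over distributions on a finite label space `Y`, the
1-Wasserstein distance (ℓ1 ground metric) between `π` and its `k`-th order
projection is at most `|Y| / (2 √k)`. -/
theorem stmt3 {Y : Type*} [Fintype Y] [DecidableEq Y] [MeasurableSpace Y]
    [MeasurableSingletonClass Y]
    (k : ℕ) (hk : 0 < k)
    (π : Measure (Y → ℝ)) [IsProbabilityMeasure π]
    (hsupp : π (stdSimplex ℝ Y) = 1) :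
    W1 l1dist π (projk k π) ≤ (Fintype.card Y : ℝ) / (2 * Real.sqrt k) := by
  classical
  set bound : ℝ := (Fintype.card Y : ℝ) / (2 * Real.sqrt k) with hbound
  have hbound0 : 0 ≤ bound := by positivity
  -- the coupling kernel
  set κ : (Y → ℝ) → Measure ((Y → ℝ) × (Y → ℝ)) :=
    fun p => ∑ ys : Fin k → Y, (∏ i, ENNReal.ofReal (p (ys i))) • Measure.dirac (p, emp k ys)
    with hκdef
  have hκ : Measurable κ := by
    apply Measure.measurable_of_measurable_coe
    intro s hs
    simp only [hκdef, Measure.finset_sum_apply, Measure.smul_apply, smul_eq_mul]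
    apply Finset.measurable_sum
    intro ys _
    apply Measurable.mul
    · exact Finset.measurable_prod _ fun i _ =>
        ENNReal.measurable_ofReal.comp (measurable_pi_apply (ys i))
    · have hpre : MeasurableSet ((fun p : Y → ℝ => (p, emp k ys)) ⁻¹' s) :=
        (measurable_id.prodMk measurable_const) hs
      have e : (fun p : Y → ℝ => Measure.dirac (p, emp k ys) s)
          = fun p => ((fun p : Y → ℝ => (p, emp k ys)) ⁻¹' s).indicator
              (fun _ => (1:ENNReal)) p := by
        funext p
        rw [Measure.dirac_apply' _ hs]
        simp [Set.indicator_apply, Set.mem_preimage]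
      rw [e]
      exact measurable_const.indicator hpre
  set γ := π.bind κ with hγ
  -- the cost function
  set F : (Y → ℝ) × (Y → ℝ) → ℝ := fun q => l1dist q.1 q.2 with hF
  have hFc : Continuous F := by
    show Continuous fun q : (Y → ℝ) × (Y → ℝ) => ∑ y, |q.1 y - q.2 y|
    apply continuous_finset_sum
    intro y _
    exact (((continuous_apply y).comp continuous_fst).sub
      ((continuous_apply y).comp continuous_snd)).abs
  have hF0 : ∀ q, 0 ≤ F q := fun q => Finset.sum_nonneg fun y _ => abs_nonneg _
  have hFm : Measurable F := hFc.measurable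
  -- a.e. membership in the simplex
  have hae : ∀ᵐ p ∂π, p ∈ stdSimplex ℝ Y := by
    have hms : MeasurableSet (stdSimplex ℝ Y) := (isClosed_stdSimplex ℝ Y).measurableSet
    have hc : π (stdSimplex ℝ Y)ᶜ = 0 := by
      rw [measure_compl hms (measure_ne_top π _), hsupp, measure_univ, tsub_self]
    exact MeasureTheory.ae_iff.mpr hc
  -- first marginal
  have hfst : γ.map Prod.fst = π := by
    rw [hγ, aux_map_bind π κ hκ measurable_fst]
    have hconst : (fun p => (κ p).map Prod.fst)
        =ᵐ[π] (fun p => Measure.dirac p) := by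
      filter_upwards [hae] with p hp
      have h1 : (κ p).map Prod.fst
          = (∑ ys : Fin k → Y, ∏ i, ENNReal.ofReal (p (ys i))) • Measure.dirac p := by
        ext s hs
        rw [Measure.map_apply measurable_fst hs, hκdef]
        rw [Measure.finset_sum_apply, Measure.smul_apply]
        have e : ∀ ys : Fin k → Y,
            ((∏ i, ENNReal.ofReal (p (ys i))) • Measure.dirac (p, emp k ys))
              (Prod.fst ⁻¹' s)
            = (∏ i, ENNReal.ofReal (p (ys i))) * Measure.dirac p s := by
          intro ys
          rw [Measure.smul_apply, smul_eq_mul]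
          congr 1
          rw [Measure.dirac_apply' _ (measurable_fst hs), Measure.dirac_apply' _ hs]
          simp [Set.indicator_apply, Set.mem_preimage]
        rw [Finset.sum_congr rfl fun ys _ => e ys, ← Finset.sum_mul, smul_eq_mul]
      have h2 : (∑ ys : Fin k → Y, ∏ i, ENNReal.ofReal (p (ys i))) = 1 := by
        have e : ∀ ys : Fin k → Y, ∏ i, ENNReal.ofReal (p (ys i))
            = ENNReal.ofReal (∏ i, p (ys i)) :=
          fun ys => (ENNReal.ofReal_prod_of_nonneg fun i _ => hp.1 _).symm
        rw [Finset.sum_congr rfl fun ys _ => e ys,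
          ← ENNReal.ofReal_sum_of_nonneg fun ys _ => Finset.prod_nonneg fun i _ => hp.1 _,
          aux_Wsum k p hp.2, ENNReal.ofReal_one]
      rw [h1, h2, one_smul]
    rw [aux_bind_congr_ae π hconst]
    exact Measure.bind_dirac
  -- second marginal
  have hsnd : γ.map Prod.snd = projk k π := by
    rw [hγ, aux_map_bind π κ hκ measurable_snd, projk]
    refine congrArg π.bind (funext fun p => ?_)
    rw [aux_pi_measOf k p]
    ext s hs
    have hemp : Measurable (emp k : (Fin k → Y) → (Y → ℝ)) := measurable_of_countable _
    rw [Measure.map_apply measurable_snd hs, Measure.map_apply hemp hs, hκdef]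
    rw [Measure.finset_sum_apply, Measure.finset_sum_apply]
    refine Finset.sum_congr rfl fun ys _ => ?_
    simp only [Measure.smul_apply, smul_eq_mul]
    congr 1
    rw [Measure.dirac_apply' _ (measurable_snd hs), Measure.dirac_apply' _ (hemp hs)]
    simp [Set.indicator_apply, Set.mem_preimage]
  -- conclude via the explicit coupling
  unfold W1
  refine le_trans (csInf_le ⟨0, ?_⟩ ⟨γ, hfst, hsnd, rfl⟩) ?_
  · rintro c ⟨γ', -, -, rfl⟩
    exact integral_nonneg fun q => Finset.sum_nonneg fun y _ => abs_nonneg _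
  · have heq : ∫ q, l1dist q.1 q.2 ∂γ = (∫⁻ q, ENNReal.ofReal (F q) ∂γ).toReal :=
      integral_eq_lintegral_of_nonneg_ae (Filter.Eventually.of_forall hF0)
        hFm.aestronglyMeasurable
    rw [heq]
    apply ENNReal.toReal_le_of_le_ofReal hbound0
    rw [hγ, Measure.lintegral_bind hκ.aemeasurable (hFm.ennreal_ofReal).aemeasurable]
    have hinner : ∀ᵐ p ∂π,
        (∫⁻ x, ENNReal.ofReal (F x) ∂κ p) ≤ ENNReal.ofReal bound := by
      filter_upwards [hae] with p hp
      rw [hκdef]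
      rw [lintegral_finset_sum_measure]
      have e : ∀ ys : Fin k → Y,
          ∫⁻ x, ENNReal.ofReal (F x)
              ∂((∏ i, ENNReal.ofReal (p (ys i))) • Measure.dirac (p, emp k ys))
          = ENNReal.ofReal (∏ i, p (ys i)) * ENNReal.ofReal (F (p, emp k ys)) := by
        intro ys
        rw [lintegral_smul_measure, lintegral_dirac' _ (hFm.ennreal_ofReal)]
        congr 1
        exact (ENNReal.ofReal_prod_of_nonneg fun i _ => hp.1 _).symm
      rw [Finset.sum_congr rfl fun ys _ => e ys]
      have e2 : ∑ ys : Fin k → Y,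
          ENNReal.ofReal (∏ i, p (ys i)) * ENNReal.ofReal (F (p, emp k ys))
          = ENNReal.ofReal (∑ ys : Fin k → Y, (∏ i, p (ys i)) * F (p, emp k ys)) := by
        rw [ENNReal.ofReal_sum_of_nonneg fun ys _ =>
          mul_nonneg (Finset.prod_nonneg fun i _ => hp.1 _) (hF0 _)]
        exact Finset.sum_congr rfl fun ys _ =>
          (ENNReal.ofReal_mul (Finset.prod_nonneg fun i _ => hp.1 _)).symm
      rw [e2]
      apply ENNReal.ofReal_le_ofReal
      exact aux_key k hk p (fun y => hp.1 y) hp.2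
    calc ∫⁻ p, ∫⁻ x, ENNReal.ofReal (F x) ∂κ p ∂π
        ≤ ∫⁻ _p, ENNReal.ofReal bound ∂π := lintegral_mono_ae hinner
      _ = ENNReal.ofReal bound := by rw [lintegral_const, measure_univ, mul_one]
end

section
/- The function M_{k,m}(p) = C(pk, m)/C(k, m) (for p ≥ m/k, and 0 otherwise), defined on the grid {0, 1/k, 2/k, ..., 1}, is m-Lipschitz: for all p₁, p₂ in the grid, |M_{k,m}(p₁) − M_{k,m}(p₂)| ≤ m·|p₁ − p₂|. -/
/-- The moment-recovery function `M_{k,m}(q) = C(qk, m)/C(k, m)` for `q ≥ m/k`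
on the grid `{0, 1/k, …, 1}`, and `0` otherwise. -/
noncomputable def Mkm (k m : ℕ) (q : ℝ) : ℝ :=
  if (m : ℝ) / k ≤ q then (Nat.choose (Nat.floor (q * k)) m : ℝ) / (Nat.choose k m)
  else 0

lemma Mkm_eval (k m i : ℕ) (hk : 0 < k) (hi : i ≤ k) :
    Mkm k m ((i : ℝ) / k) = (Nat.choose i m : ℝ) / (Nat.choose k m) := by
  have hk' : (0:ℝ) < (k:ℝ) := by exact_mod_cast hk
  have hfl : Nat.floor (((i : ℝ) / k) * k) = i := by
    rw [div_mul_cancel₀ _ (ne_of_gt hk')]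
    simp
  unfold Mkm
  rw [hfl]
  by_cases h : (m : ℝ) / k ≤ (i : ℝ) / k
  · rw [if_pos h]
  · rw [if_neg h]
    have : i < m := by
      by_contra hc
      push_neg at hc
      exact h (by gcongr)
    rw [Nat.choose_eq_zero_of_lt this]
    simp

lemma choose_diff_le (k m i j : ℕ) (hm : 1 ≤ m) (hji : j ≤ i) (hik : i ≤ k) :
    Nat.choose i m ≤ Nat.choose j m + (i - j) * Nat.choose (k-1) (m-1) := by
  induction i, hji using Nat.le_induction with
  | base => simp
  | succ n hn ih =>
    have hnk : n ≤ k - 1 := by omega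
    have ih' := ih (by omega)
    have pascal : Nat.choose (n+1) m = Nat.choose n (m-1) + Nat.choose n m := by
      have : m = (m-1) + 1 := by omega
      rw [this, Nat.choose_succ_succ]
      simp
    have hmono : Nat.choose n (m-1) ≤ Nat.choose (k-1) (m-1) :=
      Nat.choose_le_choose _ hnk
    have : n + 1 - j = (n - j) + 1 := by omega
    rw [pascal, this, add_mul, one_mul]
    omega

lemma key_ineq (k m : ℕ) (hm : 1 ≤ m) (hmk : m ≤ k) (i j : ℕ)
    (hji : j ≤ i) (hik : i ≤ k) :
    (Nat.choose i m : ℝ) / (Nat.choose k m) - (Nat.choose j m : ℝ) / (Nat.choose k m)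
      ≤ (m : ℝ) * ((i : ℝ) / k - (j : ℝ) / k) := by
  have hk : 0 < k := lt_of_lt_of_le hm hmk
  have hk' : (0:ℝ) < (k:ℝ) := by exact_mod_cast hk
  have hc : 0 < Nat.choose k m := Nat.choose_pos hmk
  have hc' : (0:ℝ) < (Nat.choose k m : ℝ) := by exact_mod_cast hc
  have hid : k * Nat.choose (k-1) (m-1) = m * Nat.choose k m := by
    have h1 : Nat.succ (k-1) = k := by omega
    have h2 : Nat.succ (m-1) = m := by omega
    have := Nat.add_one_mul_choose_eq (k-1) (m-1)
    rw [Nat.succ_eq_add_one] at h1 h2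
    rw [h1, h2] at this
    rw [this]; ring
  have hdiff := choose_diff_le k m i j hm hji hik
  -- cast to ℝ
  have hdiffR : (Nat.choose i m : ℝ) ≤ (Nat.choose j m : ℝ)
      + ((i:ℝ) - (j:ℝ)) * (Nat.choose (k-1) (m-1) : ℝ) := by
    have : ((i - j : ℕ) : ℝ) = (i:ℝ) - (j:ℝ) := by
      rw [Nat.cast_sub hji]
    calc (Nat.choose i m : ℝ) ≤ ((Nat.choose j m + (i - j) * Nat.choose (k-1) (m-1) : ℕ) : ℝ) := by
          exact_mod_cast hdiff
      _ = (Nat.choose j m : ℝ) + ((i:ℝ) - (j:ℝ)) * (Nat.choose (k-1) (m-1) : ℝ) := by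
          push_cast [Nat.cast_sub hji]; ring
  have hidR : (k:ℝ) * (Nat.choose (k-1) (m-1) : ℝ) = (m:ℝ) * (Nat.choose k m : ℝ) := by
    exact_mod_cast hid
  rw [div_sub_div_same, div_le_iff₀ hc']
  have h2 : (m:ℝ) * ((i:ℝ)/k - (j:ℝ)/k) * (Nat.choose k m : ℝ)
      = ((i:ℝ)-(j:ℝ)) * (Nat.choose (k-1) (m-1) : ℝ) := by
    field_simp
    linear_combination (((j:ℝ)-(i:ℝ))) * hidR
  rw [h2]; linarith

/-- `M_{k,m}` is `m`-Lipschitz on the grid `{0, 1/k, …, 1}`. -/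
theorem stmt8 (k m : ℕ) (hm : 1 ≤ m) (hmk : m ≤ k)
    (i j : ℕ) (hi : i ≤ k) (hj : j ≤ k) :
    |Mkm k m ((i : ℝ) / k) - Mkm k m ((j : ℝ) / k)|
      ≤ (m : ℝ) * |(i : ℝ) / k - (j : ℝ) / k| := by
  have hk : 0 < k := lt_of_lt_of_le hm hmk
  have hk' : (0:ℝ) < (k:ℝ) := by exact_mod_cast hk
  rw [Mkm_eval k m i hk hi, Mkm_eval k m j hk hj]
  rcases le_total j i with hji | hij
  · have h1 := key_ineq k m hm hmk i j hji hi
    have hmono : (Nat.choose j m : ℝ) ≤ (Nat.choose i m : ℝ) := by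
      exact_mod_cast Nat.choose_le_choose m hji
    have hc' : (0:ℝ) < (Nat.choose k m : ℝ) := by
      exact_mod_cast Nat.choose_pos hmk
    have hd : (0:ℝ) ≤ (Nat.choose i m : ℝ)/(Nat.choose k m) - (Nat.choose j m : ℝ)/(Nat.choose k m) := by
      apply sub_nonneg.mpr
      gcongr
    have hd2 : (0:ℝ) ≤ (i:ℝ)/k - (j:ℝ)/k := by
      apply sub_nonneg.mpr
      gcongr
    rw [abs_of_nonneg hd, abs_of_nonneg hd2]
    exact h1
  · have h1 := key_ineq k m hm hmk j i hij hj
    have hmono : (Nat.choose i m : ℝ) ≤ (Nat.choose j m : ℝ) := by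
      exact_mod_cast Nat.choose_le_choose m hij
    have hc' : (0:ℝ) < (Nat.choose k m : ℝ) := by
      exact_mod_cast Nat.choose_pos hmk
    have hd : (Nat.choose i m : ℝ)/(Nat.choose k m) - (Nat.choose j m : ℝ)/(Nat.choose k m) ≤ 0 := by
      apply sub_nonpos.mpr; gcongr
    have hd2 : (i:ℝ)/k - (j:ℝ)/k ≤ 0 := by
      apply sub_nonpos.mpr; gcongr
    rw [abs_of_nonpos hd, abs_of_nonpos hd2]
    linarith
end
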